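/- arXiv:1409.3193 — 11 statements merged into one kernel-verified Lean document; each statement's English description precedes it below -/
import Mathlib

section
/- In the system D(C,D,4) = A(−1,0), a nonzero element w = a₁ + a₂·i + a₃·j + a₄·k is a zero divisor if and only if a₁ = 0 and a₂ = 0; that is, for w ≠ 0, there exists v ≠ 0 with w·v = 0 if and only if a₁ = a₂ = 0. -/
open Quaternion

/-- In the system D(C,D,4) = A(−1,0), a nonzero element `w = ⟨a₁,a₂,a₃,a₄⟩` is a zero divisor iff `a₁ = 0` and `a₂ = 0`. -/
theorem zeroDivisor_iff_CD (a₁ a₂ a₃ a₄ : ℝ)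
    (hw : (⟨a₁, a₂, a₃, a₄⟩ : ℍ[ℝ, (-1 : ℝ), (0 : ℝ)]) ≠ 0) :
    (∃ v : ℍ[ℝ, (-1 : ℝ), (0 : ℝ)], v ≠ 0 ∧
        (⟨a₁, a₂, a₃, a₄⟩ : ℍ[ℝ, (-1 : ℝ), (0 : ℝ)]) * v = 0) ↔
      (a₁ = 0 ∧ a₂ = 0) := by
  constructor
  · rintro ⟨v, hv, hmul⟩
    rw [QuaternionAlgebra.ext_iff] at hmul
    obtain ⟨h1, h2, h3, h4⟩ := hmul
    simp [QuaternionAlgebra.re_mul, QuaternionAlgebra.imI_mul,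
      QuaternionAlgebra.imJ_mul, QuaternionAlgebra.imK_mul] at h1 h2 h3 h4
    by_contra hc
    have hpos : 0 < a₁ ^ 2 + a₂ ^ 2 := by
      rcases not_and_or.mp hc with h | h <;> positivity
    have hne := hpos.ne'
    have hy1 : v.re = 0 := by
      have h : (a₁ ^ 2 + a₂ ^ 2) * v.re = 0 := by linear_combination a₁ * h1 + a₂ * h2
      exact (mul_eq_zero.mp h).resolve_left hne
    have hy2 : v.imI = 0 := by
      have h : (a₁ ^ 2 + a₂ ^ 2) * v.imI = 0 := by linear_combination a₁ * h2 - a₂ * h1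
      exact (mul_eq_zero.mp h).resolve_left hne
    have hy3 : v.imJ = 0 := by
      have h : (a₁ ^ 2 + a₂ ^ 2) * v.imJ = 0 := by
        linear_combination a₁ * h3 + a₂ * h4 - (a₁ * a₃ + a₂ * a₄) * hy1 - (a₁ * a₄ - a₂ * a₃) * hy2
      exact (mul_eq_zero.mp h).resolve_left hne
    have hy4 : v.imK = 0 := by
      have h : (a₁ ^ 2 + a₂ ^ 2) * v.imK = 0 := by
        linear_combination a₁ * h4 - a₂ * h3 - (a₁ * a₄ - a₂ * a₃) * hy1 + (a₁ * a₃ + a₂ * a₄) * hy2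
      exact (mul_eq_zero.mp h).resolve_left hne
    exact hv (by rw [QuaternionAlgebra.ext_iff]; simp [hy1, hy2, hy3, hy4])
  · rintro ⟨rfl, rfl⟩
    refine ⟨⟨0, 0, 1, 0⟩, ?_, ?_⟩
    · intro h
      rw [QuaternionAlgebra.ext_iff] at h
      simp at h
    · rw [QuaternionAlgebra.ext_iff]
      simp [QuaternionAlgebra.re_mul, QuaternionAlgebra.imI_mul,
        QuaternionAlgebra.imJ_mul, QuaternionAlgebra.imK_mul]
end

section
/- In the system D(D,D,4) = A(0,0), a nonzero element w = a₁ + a₂·i + a₃·j + a₄·k is a zero divisor if and only if a₁ = 0; that is, for w ≠ 0, there exists v ≠ 0 with w·v = 0 if and only if a₁ = 0. -/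
open Quaternion

/-- In the system D(D,D,4) = A(0,0), a nonzero element `w = ⟨a₁,a₂,a₃,a₄⟩` is a zero divisor iff `a₁ = 0`. -/
theorem zeroDivisor_iff_DD (a₁ a₂ a₃ a₄ : ℝ)
    (hw : (⟨a₁, a₂, a₃, a₄⟩ : ℍ[ℝ, (0 : ℝ), (0 : ℝ)]) ≠ 0) :
    (∃ v : ℍ[ℝ, (0 : ℝ), (0 : ℝ)], v ≠ 0 ∧
        (⟨a₁, a₂, a₃, a₄⟩ : ℍ[ℝ, (0 : ℝ), (0 : ℝ)]) * v = 0) ↔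
      a₁ = 0 := by
  constructor
  · rintro ⟨v, hv, hmul⟩
    by_contra ha
    apply hv
    have h1 := congrArg QuaternionAlgebra.re hmul
    have h2 := congrArg QuaternionAlgebra.imI hmul
    have h3 := congrArg QuaternionAlgebra.imJ hmul
    have h4 := congrArg QuaternionAlgebra.imK hmul
    simp only [QuaternionAlgebra.re_mul, QuaternionAlgebra.imI_mul,
      QuaternionAlgebra.imJ_mul, QuaternionAlgebra.imK_mul,
      QuaternionAlgebra.re_zero, QuaternionAlgebra.imI_zero,
      QuaternionAlgebra.imJ_zero, QuaternionAlgebra.imK_zero] at h1 h2 h3 h4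
    have hv1 : v.re = 0 :=
      (mul_eq_zero.mp (by linear_combination h1)).resolve_left ha
    have hv2 : v.imI = 0 :=
      (mul_eq_zero.mp (by linear_combination h2 - a₂ * hv1)).resolve_left ha
    have hv3 : v.imJ = 0 :=
      (mul_eq_zero.mp (by linear_combination h3 - a₃ * hv1)).resolve_left ha
    have hv4 : v.imK = 0 :=
      (mul_eq_zero.mp (by linear_combination h4 - a₄ * hv1 + a₃ * hv2 - a₂ * hv3)).resolve_left ha
    ext <;> simp [hv1, hv2, hv3, hv4]
  · intro ha
    refine ⟨⟨0, a₂, a₃, 1⟩, ?_, ?_⟩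
    · intro h
      have := congrArg QuaternionAlgebra.imK h
      simp at this
    · ext <;> simp [QuaternionAlgebra.re_mul, QuaternionAlgebra.imI_mul,
        QuaternionAlgebra.imJ_mul, QuaternionAlgebra.imK_mul, ha] <;> ring
end

section
/- In the system D(W,D,4) = A(1,0), a nonzero element w = a₁ + a₂·i + a₃·j + a₄·k is a zero divisor if and only if a₁² = a₂² (equivalently a₁ = a₂ or a₁ = −a₂); that is, for w ≠ 0, there exists v ≠ 0 with w·v = 0 if and only if a₁² = a₂². -/
open Quaternion

/-- In the system D(W,D,4) = A(1,0), a nonzero element `w = ⟨a₁,a₂,a₃,a₄⟩` is a zero divisor iff `a₁² = a₂²`. -/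
theorem zeroDivisor_iff_WD (a₁ a₂ a₃ a₄ : ℝ)
    (hw : (⟨a₁, a₂, a₃, a₄⟩ : ℍ[ℝ, (1 : ℝ), (0 : ℝ)]) ≠ 0) :
    (∃ v : ℍ[ℝ, (1 : ℝ), (0 : ℝ)], v ≠ 0 ∧
        (⟨a₁, a₂, a₃, a₄⟩ : ℍ[ℝ, (1 : ℝ), (0 : ℝ)]) * v = 0) ↔
      a₁ ^ 2 = a₂ ^ 2 := by
  constructor
  · rintro ⟨⟨x, y, z, t⟩, hv, hmul⟩
    by_contra h
    apply hv
    rw [QuaternionAlgebra.ext_iff] at hmul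
    obtain ⟨h1, h2, h3, h4⟩ := hmul
    simp only [QuaternionAlgebra.re_mul, QuaternionAlgebra.imI_mul,
      QuaternionAlgebra.imJ_mul, QuaternionAlgebra.imK_mul,
      QuaternionAlgebra.re_zero, QuaternionAlgebra.imI_zero,
      QuaternionAlgebra.imJ_zero, QuaternionAlgebra.imK_zero] at h1 h2 h3 h4
    have hne : a₁ ^ 2 - a₂ ^ 2 ≠ 0 := sub_ne_zero.mpr h
    have hx : x = 0 := by
      have : (a₁ ^ 2 - a₂ ^ 2) * x = 0 := by linear_combination a₁ * h1 - a₂ * h2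
      exact (mul_eq_zero.mp this).resolve_left hne
    have hy : y = 0 := by
      have : (a₁ ^ 2 - a₂ ^ 2) * y = 0 := by linear_combination a₁ * h2 - a₂ * h1
      exact (mul_eq_zero.mp this).resolve_left hne
    have hz : z = 0 := by
      have : (a₁ ^ 2 - a₂ ^ 2) * z = 0 := by
        linear_combination a₁ * h3 - a₂ * h4 - (a₁ * a₃ - a₂ * a₄) * hx - (a₂ * a₃ - a₁ * a₄) * hy
      exact (mul_eq_zero.mp this).resolve_left hne
    have ht : t = 0 := by
      have : (a₁ ^ 2 - a₂ ^ 2) * t = 0 := by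
        linear_combination a₁ * h4 - a₂ * h3 - (a₁ * a₄ - a₂ * a₃) * hx - (a₂ * a₄ - a₁ * a₃) * hy
      exact (mul_eq_zero.mp this).resolve_left hne
    rw [QuaternionAlgebra.ext_iff]
    exact ⟨hx, hy, hz, ht⟩
  · intro h
    rcases eq_or_ne a₁ 0 with h0 | h0
    · have h2 : a₂ = 0 := by nlinarith
      refine ⟨⟨0, 0, 1, 0⟩, ?_, ?_⟩
      · intro hc
        rw [QuaternionAlgebra.ext_iff] at hc
        exact one_ne_zero hc.2.2.1
      · rw [QuaternionAlgebra.ext_iff]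
        refine ⟨?_, ?_, ?_, ?_⟩ <;>
          simp [h0, h2]
    · have hcase : a₂ = a₁ ∨ a₂ = -a₁ := by
        have : (a₂ - a₁) * (a₂ + a₁) = 0 := by nlinarith
        rcases mul_eq_zero.mp this with h' | h'
        · left; linarith
        · right; linarith
      rcases hcase with h2 | h2
      · refine ⟨⟨a₁, -a₁, -(a₃ + a₄), 0⟩, ?_, ?_⟩
        · intro hc
          rw [QuaternionAlgebra.ext_iff] at hc
          exact h0 hc.1
        · rw [QuaternionAlgebra.ext_iff]
          refine ⟨?_, ?_, ?_, ?_⟩ <;>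
            · simp only [QuaternionAlgebra.re_mul, QuaternionAlgebra.imI_mul,
                QuaternionAlgebra.imJ_mul, QuaternionAlgebra.imK_mul,
                QuaternionAlgebra.re_zero, QuaternionAlgebra.imI_zero,
                QuaternionAlgebra.imJ_zero, QuaternionAlgebra.imK_zero]
              rw [h2]; ring
      · refine ⟨⟨a₁, a₁, a₄ - a₃, 0⟩, ?_, ?_⟩
        · intro hc
          rw [QuaternionAlgebra.ext_iff] at hc
          exact h0 hc.1
        · rw [QuaternionAlgebra.ext_iff]
          refine ⟨?_, ?_, ?_, ?_⟩ <;>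
            · simp only [QuaternionAlgebra.re_mul, QuaternionAlgebra.imI_mul,
                QuaternionAlgebra.imJ_mul, QuaternionAlgebra.imK_mul,
                QuaternionAlgebra.re_zero, QuaternionAlgebra.imI_zero,
                QuaternionAlgebra.imJ_zero, QuaternionAlgebra.imK_zero]
              rw [h2]; ring
end

section
/- (Exponential in D(W,W,4), trigonometric case.) Let m₁, m₂, m₃, m₄ be real numbers with m₂² + m₃² − m₄² < 0 and set μ = √(m₄² − m₂² − m₃²). Define x₁(t) = e^{m₁t}·cos(μt) and x_s(t) = e^{m₁t}·(m_s/μ)·sin(μt) for s = 2,3,4. Then for every real t the functions satisfy the associated system: x₁'(t) = m₁x₁ + m₂x₂ + m₃x₃ − m₄x₄, x₂'(t) = m₂x₁ + m₁x₂ + m₄x₃ − m₃x₄, x₃'(t) = m₃x₁ − m₄x₂ + m₁x₃ + m₂x₄, x₄'(t) = m₄x₁ − m₃x₂ + m₂x₃ + m₁x₄ (each as a HasDerivAt statement), and (x₁(0), x₂(0), x₃(0), x₄(0)) = (1, 0, 0, 0). -/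
/-- Exponential in D(W,W,4) = ℍ[ℝ,1,1], trigonometric case. The given functions solve the associated real linear ODE system of Ẋ = M·X with initial value (1,0,0,0). -/
theorem exp_WW_trig (m₁ m₂ m₃ m₄ : ℝ)
    (h : m₂ ^ 2 + m₃ ^ 2 - m₄ ^ 2 < 0)
    (x₁ x₂ x₃ x₄ : ℝ → ℝ)
    (μ : ℝ) (hμ : μ = Real.sqrt (m₄ ^ 2 - m₂ ^ 2 - m₃ ^ 2))
    (hx₁ : x₁ = fun t => Real.exp (m₁ * t) * Real.cos (μ * t))
    (hx₂ : x₂ = fun t => Real.exp (m₁ * t) * (m₂ / μ) * Real.sin (μ * t))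
    (hx₃ : x₃ = fun t => Real.exp (m₁ * t) * (m₃ / μ) * Real.sin (μ * t))
    (hx₄ : x₄ = fun t => Real.exp (m₁ * t) * (m₄ / μ) * Real.sin (μ * t))
    :
    (∀ t : ℝ,
      HasDerivAt x₁ (m₁ * x₁ t + m₂ * x₂ t + m₃ * x₃ t - m₄ * x₄ t) t ∧
      HasDerivAt x₂ (m₂ * x₁ t + m₁ * x₂ t + m₄ * x₃ t - m₃ * x₄ t) t ∧
      HasDerivAt x₃ (m₃ * x₁ t - m₄ * x₂ t + m₁ * x₃ t + m₂ * x₄ t) t ∧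
      HasDerivAt x₄ (m₄ * x₁ t - m₃ * x₂ t + m₂ * x₃ t + m₁ * x₄ t) t) ∧
    x₁ 0 = 1 ∧ x₂ 0 = 0 ∧ x₃ 0 = 0 ∧ x₄ 0 = 0 := by
  have hpos : 0 < m₄ ^ 2 - m₂ ^ 2 - m₃ ^ 2 := by linarith
  have hμ2 : μ ^ 2 = m₄ ^ 2 - m₂ ^ 2 - m₃ ^ 2 := by
    rw [hμ]; exact Real.sq_sqrt hpos.le
  have hμ0 : μ ≠ 0 := by
    rw [hμ]; exact (Real.sqrt_pos.mpr hpos).ne'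
  subst hx₁ hx₂ hx₃ hx₄
  refine ⟨fun t => ?_, by simp, by simp, by simp, by simp⟩
  have he : HasDerivAt (fun t => Real.exp (m₁ * t)) (Real.exp (m₁ * t) * m₁) t := by
    simpa [mul_comm, Function.comp_def] using (Real.hasDerivAt_exp (m₁ * t)).comp t
      ((hasDerivAt_id t).const_mul m₁)
  have hc : HasDerivAt (fun t => Real.cos (μ * t)) (-Real.sin (μ * t) * μ) t := by
    simpa [mul_comm, Function.comp_def] using (Real.hasDerivAt_cos (μ * t)).comp t
      ((hasDerivAt_id t).const_mul μ)
  have hs : HasDerivAt (fun t => Real.sin (μ * t)) (Real.cos (μ * t) * μ) t := by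
    simpa [mul_comm, Function.comp_def] using (Real.hasDerivAt_sin (μ * t)).comp t
      ((hasDerivAt_id t).const_mul μ)
  refine ⟨?_, ?_, ?_, ?_⟩
  · have := he.mul hc
    refine this.congr_deriv (Eq.symm ?_)
    beta_reduce
    field_simp
    linear_combination Real.sin (t * μ) * hμ2
  · have := (he.mul_const (m₂ / μ)).mul hs
    refine this.congr_deriv (Eq.symm ?_)
    beta_reduce
    field_simp
    ring
  · have := (he.mul_const (m₃ / μ)).mul hs
    refine this.congr_deriv (Eq.symm ?_)
    beta_reduce
    field_simp
    ring
  · have := (he.mul_const (m₄ / μ)).mul hs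
    refine this.congr_deriv (Eq.symm ?_)
    beta_reduce
    field_simp
    ring
end

section
/- (Exponential in D(W,W,4), hyperbolic case.) Let m₁, m₂, m₃, m₄ be real numbers with m₂² + m₃² − m₄² > 0 and set μ = √(m₂² + m₃² − m₄²). Define x₁(t) = e^{m₁t}·cosh(μt) and x_s(t) = e^{m₁t}·(m_s/μ)·sinh(μt) for s = 2,3,4. Then for every real t the functions satisfy the associated system: x₁'(t) = m₁x₁ + m₂x₂ + m₃x₃ − m₄x₄, x₂'(t) = m₂x₁ + m₁x₂ + m₄x₃ − m₃x₄, x₃'(t) = m₃x₁ − m₄x₂ + m₁x₃ + m₂x₄, x₄'(t) = m₄x₁ − m₃x₂ + m₂x₃ + m₁x₄ (each as a HasDerivAt statement), and (x₁(0), x₂(0), x₃(0), x₄(0)) = (1, 0, 0, 0). -/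
/-- Exponential in D(W,W,4) = ℍ[ℝ,1,1], hyperbolic case. The given functions solve the associated real linear ODE system of Ẋ = M·X with initial value (1,0,0,0). -/
theorem exp_WW_hyperbolic (m₁ m₂ m₃ m₄ : ℝ)
    (h : m₂ ^ 2 + m₃ ^ 2 - m₄ ^ 2 > 0)
    (x₁ x₂ x₃ x₄ : ℝ → ℝ)
    (μ : ℝ) (hμ : μ = Real.sqrt (m₂ ^ 2 + m₃ ^ 2 - m₄ ^ 2))
    (hx₁ : x₁ = fun t => Real.exp (m₁ * t) * Real.cosh (μ * t))
    (hx₂ : x₂ = fun t => Real.exp (m₁ * t) * (m₂ / μ) * Real.sinh (μ * t))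
    (hx₃ : x₃ = fun t => Real.exp (m₁ * t) * (m₃ / μ) * Real.sinh (μ * t))
    (hx₄ : x₄ = fun t => Real.exp (m₁ * t) * (m₄ / μ) * Real.sinh (μ * t))
    :
    (∀ t : ℝ,
      HasDerivAt x₁ (m₁ * x₁ t + m₂ * x₂ t + m₃ * x₃ t - m₄ * x₄ t) t ∧
      HasDerivAt x₂ (m₂ * x₁ t + m₁ * x₂ t + m₄ * x₃ t - m₃ * x₄ t) t ∧
      HasDerivAt x₃ (m₃ * x₁ t - m₄ * x₂ t + m₁ * x₃ t + m₂ * x₄ t) t ∧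
      HasDerivAt x₄ (m₄ * x₁ t - m₃ * x₂ t + m₂ * x₃ t + m₁ * x₄ t) t) ∧
    x₁ 0 = 1 ∧ x₂ 0 = 0 ∧ x₃ 0 = 0 ∧ x₄ 0 = 0 := by
  have hμpos : 0 < μ := hμ ▸ Real.sqrt_pos.mpr h
  have hμne : μ ≠ 0 := ne_of_gt hμpos
  have hμ2 : μ ^ 2 = m₂ ^ 2 + m₃ ^ 2 - m₄ ^ 2 := by
    rw [hμ, Real.sq_sqrt h.le]
  subst hx₁ hx₂ hx₃ hx₄
  refine ⟨fun t => ?_, by simp, by simp, by simp, by simp⟩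
  have he : HasDerivAt (fun t : ℝ => Real.exp (m₁ * t)) (Real.exp (m₁ * t) * m₁) t := by
    simpa using ((hasDerivAt_id t).const_mul m₁).exp
  have hc : HasDerivAt (fun t : ℝ => Real.cosh (μ * t)) (Real.sinh (μ * t) * μ) t := by
    simpa using ((hasDerivAt_id t).const_mul μ).cosh
  have hs : HasDerivAt (fun t : ℝ => Real.sinh (μ * t)) (Real.cosh (μ * t) * μ) t := by
    simpa using ((hasDerivAt_id t).const_mul μ).sinh
  refine ⟨?_, ?_, ?_, ?_⟩
  · convert (show HasDerivAt (fun t => Real.exp (m₁ * t) * Real.cosh (μ * t)) _ t from he.mul hc) using 1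
    beta_reduce
    field_simp
    linear_combination -Real.sinh (t * μ) * hμ2
  · convert (show HasDerivAt (fun t => Real.exp (m₁ * t) * (m₂ / μ) * Real.sinh (μ * t)) _ t from (he.mul_const (m₂ / μ)).mul hs) using 1
    beta_reduce
    field_simp
    ring
  · convert (show HasDerivAt (fun t => Real.exp (m₁ * t) * (m₃ / μ) * Real.sinh (μ * t)) _ t from (he.mul_const (m₃ / μ)).mul hs) using 1
    beta_reduce
    field_simp
    ring
  · convert (show HasDerivAt (fun t => Real.exp (m₁ * t) * (m₄ / μ) * Real.sinh (μ * t)) _ t from (he.mul_const (m₄ / μ)).mul hs) using 1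
    beta_reduce
    field_simp
    ring
end

section
/- (Exponential in D(W,W,4), degenerate case.) Let m₁, m₂, m₃, m₄ be real numbers with m₂² + m₃² − m₄² = 0. Define x₁(t) = e^{m₁t} and x_s(t) = m_s·t·e^{m₁t} for s = 2,3,4. Then for every real t the functions satisfy the associated system: x₁'(t) = m₁x₁ + m₂x₂ + m₃x₃ − m₄x₄, x₂'(t) = m₂x₁ + m₁x₂ + m₄x₃ − m₃x₄, x₃'(t) = m₃x₁ − m₄x₂ + m₁x₃ + m₂x₄, x₄'(t) = m₄x₁ − m₃x₂ + m₂x₃ + m₁x₄ (each as a HasDerivAt statement), and (x₁(0), x₂(0), x₃(0), x₄(0)) = (1, 0, 0, 0). -/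
lemma hda_exp (m₁ : ℝ) (t : ℝ) :
    HasDerivAt (fun t => Real.exp (m₁ * t)) (m₁ * Real.exp (m₁ * t)) t := by
  exact ((Real.hasDerivAt_exp (m₁ * t)).comp t
    ((hasDerivAt_id t).const_mul m₁)).congr_deriv (by simp; ring)

lemma hda_texp (c m₁ : ℝ) (t : ℝ) :
    HasDerivAt (fun t => c * t * Real.exp (m₁ * t))
      (c * Real.exp (m₁ * t) + c * t * (m₁ * Real.exp (m₁ * t))) t := by
  exact (((hasDerivAt_id t).const_mul c).mul (hda_exp m₁ t)).congr_deriv (by simp)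

/-- Exponential in D(W,W,4) = ℍ[ℝ,1,1], degenerate case. The given functions solve the associated real linear ODE system of Ẋ = M·X with initial value (1,0,0,0). -/
theorem exp_WW_degenerate (m₁ m₂ m₃ m₄ : ℝ)
    (h : m₂ ^ 2 + m₃ ^ 2 - m₄ ^ 2 = 0)
    (x₁ x₂ x₃ x₄ : ℝ → ℝ)
    (hx₁ : x₁ = fun t => Real.exp (m₁ * t))
    (hx₂ : x₂ = fun t => m₂ * t * Real.exp (m₁ * t))
    (hx₃ : x₃ = fun t => m₃ * t * Real.exp (m₁ * t))
    (hx₄ : x₄ = fun t => m₄ * t * Real.exp (m₁ * t))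
    :
    (∀ t : ℝ,
      HasDerivAt x₁ (m₁ * x₁ t + m₂ * x₂ t + m₃ * x₃ t - m₄ * x₄ t) t ∧
      HasDerivAt x₂ (m₂ * x₁ t + m₁ * x₂ t + m₄ * x₃ t - m₃ * x₄ t) t ∧
      HasDerivAt x₃ (m₃ * x₁ t - m₄ * x₂ t + m₁ * x₃ t + m₂ * x₄ t) t ∧
      HasDerivAt x₄ (m₄ * x₁ t - m₃ * x₂ t + m₂ * x₃ t + m₁ * x₄ t) t) ∧
    x₁ 0 = 1 ∧ x₂ 0 = 0 ∧ x₃ 0 = 0 ∧ x₄ 0 = 0 := by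
  subst hx₁ hx₂ hx₃ hx₄
  refine ⟨fun t => ⟨?_, ?_, ?_, ?_⟩, by simp, by simp, by simp, by simp⟩
  · have := hda_exp m₁ t
    convert this using 1
    linear_combination (t * Real.exp (m₁ * t)) * h
  · have := hda_texp m₂ m₁ t
    convert this using 1; ring
  · have := hda_texp m₃ m₁ t
    convert this using 1; ring
  · have := hda_texp m₄ m₁ t
    convert this using 1; ring
end

section
/- (Exponential in D(C,D,4).) Let m₁, m₂, m₃, m₄ be real numbers with m₂ ≠ 0. Define x₁(t) = e^{m₁t}·cos(m₂t), x₂(t) = e^{m₁t}·sin(m₂t), x₃(t) = e^{m₁t}·(m₃/m₂)·sin(m₂t), x₄(t) = e^{m₁t}·(m₄/m₂)·sin(m₂t). Then for every real t the functions satisfy the associated system: x₁'(t) = m₁x₁ − m₂x₂, x₂'(t) = m₂x₁ + m₁x₂, x₃'(t) = m₃x₁ + m₄x₂ + m₁x₃ − m₂x₄, x₄'(t) = m₄x₁ − m₃x₂ + m₂x₃ + m₁x₄ (each as a HasDerivAt statement), and (x₁(0), x₂(0), x₃(0), x₄(0)) = (1, 0, 0, 0); this establishes the representation Exp(M) = e^{m₁}(cos(m₂)·1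 + (sin(m₂)/m₂)·(m₂·i + m₃·j + m₄·k)). -/
/-- Exponential in D(C,D,4) = ℍ[ℝ,−1,0]: establishes Exp(M) = e^{m₁}(cos m₂ + (sin m₂ / m₂)(m₂·i + m₃·j + m₄·k)). The given functions solve the associated real linear ODE system of Ẋ = M·X with initial value (1,0,0,0). -/
theorem exp_CD (m₁ m₂ m₃ m₄ : ℝ)
    (h : m₂ ≠ 0)
    (x₁ x₂ x₃ x₄ : ℝ → ℝ)
    (hx₁ : x₁ = fun t => Real.exp (m₁ * t) * Real.cos (m₂ * t))
    (hx₂ : x₂ = fun t => Real.exp (m₁ * t) * Real.sin (m₂ * t))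
    (hx₃ : x₃ = fun t => Real.exp (m₁ * t) * (m₃ / m₂) * Real.sin (m₂ * t))
    (hx₄ : x₄ = fun t => Real.exp (m₁ * t) * (m₄ / m₂) * Real.sin (m₂ * t))
    :
    (∀ t : ℝ,
      HasDerivAt x₁ (m₁ * x₁ t - m₂ * x₂ t) t ∧
      HasDerivAt x₂ (m₂ * x₁ t + m₁ * x₂ t) t ∧
      HasDerivAt x₃ (m₃ * x₁ t + m₄ * x₂ t + m₁ * x₃ t - m₂ * x₄ t) t ∧
      HasDerivAt x₄ (m₄ * x₁ t - m₃ * x₂ t + m₂ * x₃ t + m₁ * x₄ t) t) ∧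
    x₁ 0 = 1 ∧ x₂ 0 = 0 ∧ x₃ 0 = 0 ∧ x₄ 0 = 0 := by
  subst hx₁ hx₂ hx₃ hx₄
  refine ⟨fun t => ?_, by simp, by simp, by simp, by simp⟩
  have he : HasDerivAt (fun t => Real.exp (m₁ * t)) (Real.exp (m₁ * t) * m₁) t :=
    by simpa using ((hasDerivAt_id t).const_mul m₁).exp
  have hc : HasDerivAt (fun t => Real.cos (m₂ * t)) (-Real.sin (m₂ * t) * m₂) t :=
    by simpa using ((hasDerivAt_id t).const_mul m₂).cos
  have hs : HasDerivAt (fun t => Real.sin (m₂ * t)) (Real.cos (m₂ * t) * m₂) t :=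
    by simpa using ((hasDerivAt_id t).const_mul m₂).sin
  refine ⟨?_, ?_, ?_, ?_⟩
  · have := he.fun_mul hc; refine this.congr_deriv ?_; beta_reduce; ring
  · have := he.fun_mul hs; refine this.congr_deriv ?_; beta_reduce; ring
  · have := (he.mul_const (m₃ / m₂)).fun_mul hs
    refine this.congr_deriv ?_; beta_reduce; field_simp; ring
  · have := (he.mul_const (m₄ / m₂)).fun_mul hs
    refine this.congr_deriv ?_; beta_reduce; field_simp; ring
end

section
/- (Exponential in D(W,D,4).) Let m₁, m₂, m₃, m₄ be real numbers with m₂ ≠ 0. Define x₁(t) = e^{m₁t}·cosh(m₂t), x₂(t) = e^{m₁t}·sinh(m₂t), x₃(t) = e^{m₁t}·(m₃/m₂)·sinh(m₂t), x₄(t) = e^{m₁t}·(m₄/m₂)·sinh(m₂t). Then for every real t the functions satisfy the associated system: x₁'(t) = m₁x₁ + m₂x₂, x₂'(t) = m₂x₁ + m₁x₂, x₃'(t) = m₃x₁ − m₄x₂ + m₁x₃ + m₂x₄, x₄'(t) = m₄x₁ − m₃x₂ + m₂x₃ + m₁x₄ (each as a HasDerivAt statement), and (x₁(0), x₂(0),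 x₃(0), x₄(0)) = (1, 0, 0, 0); this establishes the representation Exp(M) = e^{m₁}(cosh(m₂)·1 + (sinh(m₂)/m₂)·(m₂·i + m₃·j + m₄·k)). -/
/-- Exponential in D(W,D,4) = ℍ[ℝ,1,0]: establishes Exp(M) = e^{m₁}(cosh m₂ + (sinh m₂ / m₂)(m₂·i + m₃·j + m₄·k)). The given functions solve the associated real linear ODE system of Ẋ = M·X with initial value (1,0,0,0). -/
theorem exp_WD (m₁ m₂ m₃ m₄ : ℝ)
    (h : m₂ ≠ 0)
    (x₁ x₂ x₃ x₄ : ℝ → ℝ)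
    (hx₁ : x₁ = fun t => Real.exp (m₁ * t) * Real.cosh (m₂ * t))
    (hx₂ : x₂ = fun t => Real.exp (m₁ * t) * Real.sinh (m₂ * t))
    (hx₃ : x₃ = fun t => Real.exp (m₁ * t) * (m₃ / m₂) * Real.sinh (m₂ * t))
    (hx₄ : x₄ = fun t => Real.exp (m₁ * t) * (m₄ / m₂) * Real.sinh (m₂ * t))
    :
    (∀ t : ℝ,
      HasDerivAt x₁ (m₁ * x₁ t + m₂ * x₂ t) t ∧
      HasDerivAt x₂ (m₂ * x₁ t + m₁ * x₂ t) t ∧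
      HasDerivAt x₃ (m₃ * x₁ t - m₄ * x₂ t + m₁ * x₃ t + m₂ * x₄ t) t ∧
      HasDerivAt x₄ (m₄ * x₁ t - m₃ * x₂ t + m₂ * x₃ t + m₁ * x₄ t) t) ∧
    x₁ 0 = 1 ∧ x₂ 0 = 0 ∧ x₃ 0 = 0 ∧ x₄ 0 = 0 := by
  subst hx₁ hx₂ hx₃ hx₄
  refine ⟨fun t => ?_, by simp, by simp, by simp, by simp⟩
  have hm1 : HasDerivAt (fun t : ℝ => m₁ * t) m₁ t := by
    simpa using (hasDerivAt_id t).const_mul m₁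
  have hm2 : HasDerivAt (fun t : ℝ => m₂ * t) m₂ t := by
    simpa using (hasDerivAt_id t).const_mul m₂
  have he := hm1.exp
  have hc := hm2.cosh
  have hs := hm2.sinh
  refine ⟨?_, ?_, ?_, ?_⟩
  · have := he.fun_mul hc
    refine this.congr_deriv ?_
    ring
  · have := he.fun_mul hs
    refine this.congr_deriv ?_
    ring
  · have := (he.mul_const (m₃ / m₂)).fun_mul hs
    refine this.congr_deriv ?_
    field_simp
    ring
  · have := (he.mul_const (m₄ / m₂)).fun_mul hs
    refine this.congr_deriv ?_
    field_simp
    ring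
end

section
/- (Exponential in AH, hyperbolic case.) Let m₁, m₂, m₃, m₄ be real numbers with m₃² + m₄² − m₂² > 0 and set μ = √(m₃² + m₄² − m₂²). Define x₁(t) = e^{m₁t}·cosh(μt) and x_s(t) = e^{m₁t}·(m_s/μ)·sinh(μt) for s = 2,3,4. Then for every real t the functions satisfy the associated system: x₁'(t) = m₁x₁ − m₂x₂ + m₃x₃ + m₄x₄, x₂'(t) = m₂x₁ + m₁x₂ − m₃x₄ + m₄x₃, x₃'(t) = m₃x₁ + m₄x₂ + m₁x₃ − m₂x₄, x₄'(t) = m₄x₁ − m₃x₂ + m₂x₃ + m₁x₄ (each as a HasDerivAt statement), and (x₁(0), x₂(0), x₃(0), x₄(0)) = (1, 0, 0, 0). -/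
/-- Exponential in AH = ℍ[ℝ,−1,1], hyperbolic case. The given functions solve the associated real linear ODE system of Ẋ = M·X with initial value (1,0,0,0). -/
theorem exp_AH_hyperbolic (m₁ m₂ m₃ m₄ : ℝ)
    (h : m₃ ^ 2 + m₄ ^ 2 - m₂ ^ 2 > 0)
    (x₁ x₂ x₃ x₄ : ℝ → ℝ)
    (μ : ℝ) (hμ : μ = Real.sqrt (m₃ ^ 2 + m₄ ^ 2 - m₂ ^ 2))
    (hx₁ : x₁ = fun t => Real.exp (m₁ * t) * Real.cosh (μ * t))
    (hx₂ : x₂ = fun t => Real.exp (m₁ * t) * (m₂ / μ) * Real.sinh (μ * t))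
    (hx₃ : x₃ = fun t => Real.exp (m₁ * t) * (m₃ / μ) * Real.sinh (μ * t))
    (hx₄ : x₄ = fun t => Real.exp (m₁ * t) * (m₄ / μ) * Real.sinh (μ * t))
    :
    (∀ t : ℝ,
      HasDerivAt x₁ (m₁ * x₁ t - m₂ * x₂ t + m₃ * x₃ t + m₄ * x₄ t) t ∧
      HasDerivAt x₂ (m₂ * x₁ t + m₁ * x₂ t - m₃ * x₄ t + m₄ * x₃ t) t ∧
      HasDerivAt x₃ (m₃ * x₁ t + m₄ * x₂ t + m₁ * x₃ t - m₂ * x₄ t) t ∧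
      HasDerivAt x₄ (m₄ * x₁ t - m₃ * x₂ t + m₂ * x₃ t + m₁ * x₄ t) t) ∧
    x₁ 0 = 1 ∧ x₂ 0 = 0 ∧ x₃ 0 = 0 ∧ x₄ 0 = 0 := by
  have hμpos : 0 < μ := hμ ▸ Real.sqrt_pos.mpr h
  have hμne : μ ≠ 0 := hμpos.ne'
  have hμ2 : μ * μ = m₃ ^ 2 + m₄ ^ 2 - m₂ ^ 2 := by
    rw [hμ]; exact Real.mul_self_sqrt h.le
  subst hx₁ hx₂ hx₃ hx₄
  have he : ∀ t : ℝ, HasDerivAt (fun t => Real.exp (m₁ * t)) (m₁ * Real.exp (m₁ * t)) t := by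
    intro t
    simpa [mul_comm, Function.comp_def] using (Real.hasDerivAt_exp (m₁ * t)).comp t
      ((hasDerivAt_id t).const_mul m₁)
  have hch : ∀ t : ℝ, HasDerivAt (fun t => Real.cosh (μ * t)) (μ * Real.sinh (μ * t)) t := by
    intro t
    simpa [mul_comm, Function.comp_def] using (Real.hasDerivAt_cosh (μ * t)).comp t
      ((hasDerivAt_id t).const_mul μ)
  have hsh : ∀ t : ℝ, HasDerivAt (fun t => Real.sinh (μ * t)) (μ * Real.cosh (μ * t)) t := by
    intro t
    simpa [mul_comm, Function.comp_def] using (Real.hasDerivAt_sinh (μ * t)).comp t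
      ((hasDerivAt_id t).const_mul μ)
  refine ⟨fun t => ⟨?_, ?_, ?_, ?_⟩, ?_, ?_, ?_, ?_⟩
  · have := (he t).mul (hch t)
    refine this.congr_deriv (Eq.symm ?_)
    field_simp
    linear_combination (-(Real.sinh (t * μ))) * hμ2
  · have := ((he t).mul_const (m₂ / μ)).mul (hsh t)
    refine this.congr_deriv (Eq.symm ?_)
    field_simp
    ring
  · have := ((he t).mul_const (m₃ / μ)).mul (hsh t)
    refine this.congr_deriv (Eq.symm ?_)
    field_simp
    ring
  · have := ((he t).mul_const (m₄ / μ)).mul (hsh t)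
    refine this.congr_deriv (Eq.symm ?_)
    field_simp
    ring
  · simp
  · simp
  · simp
  · simp
end

section
/- (Exponential in AH, trigonometric case.) Let m₁, m₂, m₃, m₄ be real numbers with m₃² + m₄² − m₂² < 0 and set μ = √(m₂² − m₃² − m₄²). Define x₁(t) = e^{m₁t}·cos(μt) and x_s(t) = e^{m₁t}·(m_s/μ)·sin(μt) for s = 2,3,4. Then for every real t the functions satisfy the associated system: x₁'(t) = m₁x₁ − m₂x₂ + m₃x₃ + m₄x₄, x₂'(t) = m₂x₁ + m₁x₂ − m₃x₄ + m₄x₃, x₃'(t) = m₃x₁ + m₄x₂ + m₁x₃ − m₂x₄, x₄'(t) = m₄x₁ − m₃x₂ + m₂x₃ + m₁x₄ (each as a HasDerivAt statement), and (x₁(0), x₂(0), x₃(0), x₄(0)) = (1, 0, 0, 0). -/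
/-- Exponential in AH = ℍ[ℝ,−1,1], trigonometric case. The given functions solve the associated real linear ODE system of Ẋ = M·X with initial value (1,0,0,0). -/
theorem exp_AH_trig (m₁ m₂ m₃ m₄ : ℝ)
    (h : m₃ ^ 2 + m₄ ^ 2 - m₂ ^ 2 < 0)
    (x₁ x₂ x₃ x₄ : ℝ → ℝ)
    (μ : ℝ) (hμ : μ = Real.sqrt (m₂ ^ 2 - m₃ ^ 2 - m₄ ^ 2))
    (hx₁ : x₁ = fun t => Real.exp (m₁ * t) * Real.cos (μ * t))
    (hx₂ : x₂ = fun t => Real.exp (m₁ * t) * (m₂ / μ) * Real.sin (μ * t))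
    (hx₃ : x₃ = fun t => Real.exp (m₁ * t) * (m₃ / μ) * Real.sin (μ * t))
    (hx₄ : x₄ = fun t => Real.exp (m₁ * t) * (m₄ / μ) * Real.sin (μ * t))
    :
    (∀ t : ℝ,
      HasDerivAt x₁ (m₁ * x₁ t - m₂ * x₂ t + m₃ * x₃ t + m₄ * x₄ t) t ∧
      HasDerivAt x₂ (m₂ * x₁ t + m₁ * x₂ t - m₃ * x₄ t + m₄ * x₃ t) t ∧
      HasDerivAt x₃ (m₃ * x₁ t + m₄ * x₂ t + m₁ * x₃ t - m₂ * x₄ t) t ∧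
      HasDerivAt x₄ (m₄ * x₁ t - m₃ * x₂ t + m₂ * x₃ t + m₁ * x₄ t) t) ∧
    x₁ 0 = 1 ∧ x₂ 0 = 0 ∧ x₃ 0 = 0 ∧ x₄ 0 = 0 := by
  have hpos : 0 < m₂ ^ 2 - m₃ ^ 2 - m₄ ^ 2 := by linarith
  have hμpos : 0 < μ := hμ ▸ Real.sqrt_pos.mpr hpos
  have hμne : μ ≠ 0 := ne_of_gt hμpos
  have hμ2 : μ ^ 2 = m₂ ^ 2 - m₃ ^ 2 - m₄ ^ 2 := by
    rw [hμ, Real.sq_sqrt hpos.le]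
  subst hx₁ hx₂ hx₃ hx₄
  refine ⟨fun t => ?_, by simp, by simp, by simp, by simp⟩
  have ht : HasDerivAt (fun t : ℝ => m₁ * t) m₁ t := by
    simpa using (hasDerivAt_id t).const_mul m₁
  have hs : HasDerivAt (fun t : ℝ => μ * t) μ t := by
    simpa using (hasDerivAt_id t).const_mul μ
  have he := ht.exp
  have hc := hs.cos
  have hsin := hs.sin
  refine ⟨?_, ?_, ?_, ?_⟩
  · refine (he.mul hc).congr_deriv ?_
    field_simp
    linear_combination (-Real.sin (t * μ)) * hμ2
  · refine ((he.mul_const (m₂ / μ)).mul hsin).congr_deriv ?_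
    field_simp
    ring
  · refine ((he.mul_const (m₃ / μ)).mul hsin).congr_deriv ?_
    field_simp
    ring
  · refine ((he.mul_const (m₄ / μ)).mul hsin).congr_deriv ?_
    field_simp
    ring
end

section
/- (Exponential in AH, degenerate case.) Let m₁, m₂, m₃, m₄ be real numbers with m₃² + m₄² − m₂² = 0. Define x₁(t) = e^{m₁t} and x_s(t) = m_s·t·e^{m₁t} for s = 2,3,4. Then for every real t the functions satisfy the associated system: x₁'(t) = m₁x₁ − m₂x₂ + m₃x₃ + m₄x₄, x₂'(t) = m₂x₁ + m₁x₂ − m₃x₄ + m₄x₃, x₃'(t) = m₃x₁ + m₄x₂ + m₁x₃ − m₂x₄, x₄'(t) = m₄x₁ − m₃x₂ + m₂x₃ + m₁x₄ (each as a HasDerivAt statement), and (x₁(0), x₂(0), x₃(0), x₄(0)) = (1, 0, 0, 0); this establishes the representation Exp(M) = e^{m₁}(1 + m₂·i + m₃·j + m₄·k) in this case. -/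
lemma aux_deriv (m₁ c : ℝ) (t : ℝ) :
    HasDerivAt (fun t : ℝ => c * t * Real.exp (m₁ * t))
      (c * Real.exp (m₁ * t) + c * t * (m₁ * Real.exp (m₁ * t))) t := by
  have he : HasDerivAt (fun t : ℝ => Real.exp (m₁ * t)) (m₁ * Real.exp (m₁ * t)) t := by
    have := (Real.hasDerivAt_exp (m₁ * t)).comp t ((hasDerivAt_id t).const_mul m₁)
    simpa [mul_comm, Function.comp_def] using this
  have hc : HasDerivAt (fun t : ℝ => c * t) c t := by
    simpa using (hasDerivAt_id t).const_mul c
  simpa [Pi.mul_def] using hc.mul he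

/-- Exponential in AH = ℍ[ℝ,−1,1], degenerate case: establishes Exp(M) = e^{m₁}(1 + m₂·i + m₃·j + m₄·k). The given functions solve the associated real linear ODE system of Ẋ = M·X with initial value (1,0,0,0). -/
theorem exp_AH_degenerate (m₁ m₂ m₃ m₄ : ℝ)
    (h : m₃ ^ 2 + m₄ ^ 2 - m₂ ^ 2 = 0)
    (x₁ x₂ x₃ x₄ : ℝ → ℝ)
    (hx₁ : x₁ = fun t => Real.exp (m₁ * t))
    (hx₂ : x₂ = fun t => m₂ * t * Real.exp (m₁ * t))
    (hx₃ : x₃ = fun t => m₃ * t * Real.exp (m₁ * t))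
    (hx₄ : x₄ = fun t => m₄ * t * Real.exp (m₁ * t))
    :
    (∀ t : ℝ,
      HasDerivAt x₁ (m₁ * x₁ t - m₂ * x₂ t + m₃ * x₃ t + m₄ * x₄ t) t ∧
      HasDerivAt x₂ (m₂ * x₁ t + m₁ * x₂ t - m₃ * x₄ t + m₄ * x₃ t) t ∧
      HasDerivAt x₃ (m₃ * x₁ t + m₄ * x₂ t + m₁ * x₃ t - m₂ * x₄ t) t ∧
      HasDerivAt x₄ (m₄ * x₁ t - m₃ * x₂ t + m₂ * x₃ t + m₁ * x₄ t) t) ∧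
    x₁ 0 = 1 ∧ x₂ 0 = 0 ∧ x₃ 0 = 0 ∧ x₄ 0 = 0 := by
  subst hx₁ hx₂ hx₃ hx₄
  refine ⟨fun t => ?_, by simp, by simp, by simp, by simp⟩
  have he : HasDerivAt (fun t : ℝ => Real.exp (m₁ * t)) (m₁ * Real.exp (m₁ * t)) t := by
    have := (Real.hasDerivAt_exp (m₁ * t)).comp t ((hasDerivAt_id t).const_mul m₁)
    simpa [mul_comm, Function.comp_def] using this
  have hm2 : m₂ ^ 2 = m₃ ^ 2 + m₄ ^ 2 := by linarith
  refine ⟨?_, ?_, ?_, ?_⟩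
  · convert he using 1; simp only; linear_combination (t * Real.exp (m₁ * t)) * h
  · convert aux_deriv m₁ m₂ t using 1; ring
  · convert aux_deriv m₁ m₃ t using 1; ring
  · convert aux_deriv m₁ m₄ t using 1; ring
end
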